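/- Let G have maximum degree Δ ≥ 3 and suppose a polymer model (C(G), w) with q spins satisfies the polymer sampling condition w_γ ≤ e^{−τ|γ|} for all γ ∈ C(G), with constant τ ≥ 5 + 3·log((q−1)Δ). Then the Kotecký–Preiss condition holds: for every γ ∈ C(G), Σ_{γ' ≁ γ} e^{|γ'|} w_{γ'} ≤ |γ|. -/

import Mathlib

open Finset

attribute [local instance] Classical.propDecidable

/-- A polymer in a subset polymer model: a nonempty connected set of vertices together with
an assignment of non-ground-state spins to its vertices. -/
structure Polymer {V : Type} (G : SimpleGraph V) (q : ℕ) (g : V → Fin q) where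
  verts : Finset V
  nonempty : verts.Nonempty
  connected : (G.induce (↑verts : Set V)).Connected
  spin : V → Fin q
  spin_ne : ∀ v ∈ verts, spin v ≠ g v
  spin_ground : ∀ v ∉ verts, spin v = g v

namespace Polymer

variable {V : Type} {G : SimpleGraph V} {q : ℕ} {g : V → Fin q}

/-- The size of a polymer: its number of vertices. -/
def size (γ : Polymer G q g) : ℕ := γ.verts.card

/-- Two polymers are incompatible if their vertex sets are at graph distance at most 1. -/
def Incompat (γ γ' : Polymer G q g) : Prop :=
  ∃ u ∈ γ.verts, ∃ u' ∈ γ'.verts, u = u' ∨ G.Adj u u'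

end Polymer

set_option linter.unusedSectionVars false
set_option maxHeartbeats 1600000

section WalkAux
variable {V : Type} [DecidableEq V] {G : SimpleGraph V}

lemma walk_of_induce {s : Set V} {a b : s} (p : (G.induce s).Walk a b) :
    ∃ q : G.Walk a.1 b.1, q.support = p.support.map Subtype.val :=
  ⟨p.map (SimpleGraph.Embedding.induce s).toHom, by exact SimpleGraph.Walk.support_map _ _⟩

lemma reach_induce_of_walk {s : Set V} {a b : V} (p : G.Walk a b) :
    (∀ x ∈ p.support, x ∈ s) → ∀ (ha : a ∈ s) (hb : b ∈ s),
      (G.induce s).Reachable ⟨a, ha⟩ ⟨b, hb⟩ := by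
  induction p with
  | nil => intro _ ha hb; exact SimpleGraph.Reachable.refl _
  | @cons a c b h p ih =>
    intro hs ha hb
    have hc : c ∈ s := hs c (by simp)
    have hadj : (G.induce s).Adj ⟨a, ha⟩ ⟨c, hc⟩ := h
    exact hadj.reachable.trans (ih (fun x hx => hs x (by simp [hx])) hc hb)

/-- In a connected induced subgraph with at least two vertices one can delete a vertex
(distinct from a given one) keeping connectivity, and the deleted vertex has a neighbor
in the rest. -/
lemma exists_noncut (S : Finset V) (hconn : (G.induce (↑S : Set V)).Connected)
    (hcard : 2 ≤ S.card) {u : V} (hu : u ∈ S) :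
    ∃ v ∈ S, v ≠ u ∧ (∃ x ∈ S.erase v, G.Adj x v) ∧
      (G.induce (↑(S.erase v) : Set V)).Connected := by
  set H := G.induce (↑S : Set V) with hH
  have hu' : u ∈ (↑S : Set V) := by simpa using hu
  set u' : (↑S : Set V) := ⟨u, hu'⟩ with hu'def
  obtain ⟨v', -, hmax⟩ :=
    Finset.exists_max_image (Finset.univ : Finset (↑S : Set V)) (fun x => H.dist u' x)
      ⟨u', Finset.mem_univ _⟩
  obtain ⟨w, hw, hwu⟩ := Finset.exists_mem_ne (s := S) (by omega) u
  have hw' : w ∈ (↑S : Set V) := by simpa using hw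
  have hdw : 0 < H.dist u' ⟨w, hw'⟩ :=
    hconn.pos_dist_of_ne (by simp [hu'def, Subtype.ext_iff, hwu.symm, Ne])
  have hdv : 0 < H.dist u' v' := lt_of_lt_of_le hdw (hmax _ (Finset.mem_univ _))
  have hvne : v' ≠ u' := by
    rintro rfl
    simp [SimpleGraph.dist_self] at hdv
  refine ⟨v'.1, by simpa using v'.2, ?_, ?_, ?_⟩
  · intro h; exact hvne (Subtype.ext h)
  · obtain ⟨p, hp⟩ := hconn.exists_walk_length_eq_dist u' v'
    obtain ⟨x', hadj, p₂, -⟩ := SimpleGraph.Walk.exists_eq_cons_of_ne hvne p.reverse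
    have hx : (x' : V) ∈ S.erase v'.1 := by
      refine Finset.mem_erase.2 ⟨fun h => hadj.ne (Subtype.ext h).symm, by simpa using x'.2⟩
    have : G.Adj (v' : V) (x' : V) := hadj
    exact ⟨x', hx, this.symm⟩
  · have huerase : u ∈ (↑(S.erase v'.1) : Set V) := by
      simp only [Finset.coe_erase, Set.mem_diff, Set.mem_singleton_iff]
      exact ⟨hu', fun h => hvne (Subtype.ext h.symm)⟩
    have key : ∀ b : (↑(S.erase v'.1) : Set V),
        (G.induce (↑(S.erase v'.1) : Set V)).Reachable ⟨u, huerase⟩ b := by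
      rintro ⟨b, hb⟩
      have hbS : b ∈ (↑S : Set V) := by
        simp only [Finset.coe_erase, Set.mem_diff] at hb; exact hb.1
      have hbv : b ≠ v'.1 := by
        simp only [Finset.coe_erase, Set.mem_diff, Set.mem_singleton_iff] at hb; exact hb.2
      obtain ⟨p, hp⟩ := hconn.exists_walk_length_eq_dist u' ⟨b, hbS⟩
      have hvsup : v' ∉ p.support := by
        intro hmem
        have h1 : H.dist u' v' ≤ (p.takeUntil v' hmem).length := SimpleGraph.dist_le _
        have h2 : 1 ≤ (p.dropUntil v' hmem).length := by
          rcases Nat.eq_zero_or_pos (p.dropUntil v' hmem).length with h0 | h0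
          · exact absurd (SimpleGraph.Walk.eq_of_length_eq_zero h0)
              (fun h => hbv (congrArg Subtype.val h).symm)
          · exact h0
        have h3 : (p.takeUntil v' hmem).length + (p.dropUntil v' hmem).length = p.length := by
          rw [← SimpleGraph.Walk.length_append, SimpleGraph.Walk.take_spec]
        have h4 : p.length ≤ H.dist u' v' := hp ▸ hmax _ (Finset.mem_univ _)
        omega
      obtain ⟨q, hq⟩ := walk_of_induce p
      have hsup : ∀ x ∈ q.support, x ∈ (↑(S.erase v'.1) : Set V) := by
        intro x hx
        rw [hq] at hx
        obtain ⟨y, hy, rfl⟩ := List.mem_map.1 hx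
        simp only [Finset.coe_erase, Set.mem_diff, Set.mem_singleton_iff]
        exact ⟨y.2, fun h => hvsup ((Subtype.ext h) ▸ hy)⟩
      exact reach_induce_of_walk q hsup huerase hb
    haveI : Nonempty (↑(S.erase v'.1) : Set V) := ⟨⟨u, huerase⟩⟩
    exact ⟨fun a b => (key a).symm.trans (key b)⟩

/-- Every connected induced subgraph on vertex set `S` has, from any start vertex, a closed
walk of length `2(|S|-1)` whose support is exactly `S`. -/
lemma cover_walk : ∀ (n : ℕ) (S : Finset V), S.card = n →
    (G.induce (↑S : Set V)).Connected → ∀ u ∈ S,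
    ∃ p : G.Walk u u, p.length = 2 * (S.card - 1) ∧ p.support.toFinset = S := by
  intro n
  induction n using Nat.strong_induction_on with
  | _ n ih =>
    intro S hcardn hconn u hu
    rcases Nat.lt_or_ge n 2 with hn | hn
    · have h1 : S.card = 1 := by
        have : 0 < S.card := Finset.card_pos.2 ⟨u, hu⟩
        omega
      have hS : S = {u} := by
        rw [Finset.card_eq_one] at h1
        obtain ⟨a, rfl⟩ := h1
        simp_all
      exact ⟨SimpleGraph.Walk.nil, by simp [hS, h1]⟩
    · obtain ⟨v, hvS, hvu, ⟨x, hx, hxv⟩, hconn'⟩ := exists_noncut S hconn (by omega) hu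
      have hcard' : (S.erase v).card = n - 1 := by
        rw [Finset.card_erase_of_mem hvS, hcardn]
      have hu' : u ∈ S.erase v := Finset.mem_erase.2 ⟨hvu.symm, hu⟩
      obtain ⟨p', hlen', hsup'⟩ :=
        ih (n-1) (by omega) (S.erase v) hcard' hconn' u hu'
      have hxsup : x ∈ p'.support := by
        rw [← List.mem_toFinset, hsup']; exact hx
      set t := p'.takeUntil x hxsup with ht
      set d := p'.dropUntil x hxsup with hd
      refine ⟨t.append (SimpleGraph.Walk.cons hxv (SimpleGraph.Walk.cons hxv.symm d)), ?_, ?_⟩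
      · have h3 : t.length + d.length = p'.length := by
          rw [← SimpleGraph.Walk.length_append, SimpleGraph.Walk.take_spec]
        rw [SimpleGraph.Walk.length_append]
        simp only [SimpleGraph.Walk.length_cons]
        rw [hcard', hlen'] at *
        omega
      · have hdsup : d.support = x :: d.support.tail := SimpleGraph.Walk.support_eq_cons d
        have hsplit : p'.support = t.support ++ d.support.tail := by
          rw [← SimpleGraph.Walk.support_append, SimpleGraph.Walk.take_spec]
        have hxt : x ∈ t.support := SimpleGraph.Walk.end_mem_support t
        ext y
        simp only [List.mem_toFinset, SimpleGraph.Walk.mem_support_append_iff,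
          SimpleGraph.Walk.support_cons, List.mem_cons]
        constructor
        · rintro (hy | hy | hy | hy)
          · have : y ∈ p'.support := by rw [hsplit]; exact List.mem_append_left _ hy
            have h2 : y ∈ p'.support.toFinset := List.mem_toFinset.2 this
            rw [hsup'] at h2
            exact Finset.mem_of_mem_erase h2
          · subst hy; exact Finset.mem_of_mem_erase hx
          · subst hy; exact hvS
          · have : y ∈ p'.support := SimpleGraph.Walk.support_dropUntil_subset p' hxsup hy
            rw [← List.mem_toFinset, hsup'] at this
            exact Finset.mem_of_mem_erase this
        · intro hy
          rcases eq_or_ne y v with rfl | hyv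
          · right; right; left; rfl
          · have : y ∈ p'.support := by
              rw [← List.mem_toFinset, hsup']; exact Finset.mem_erase.2 ⟨hyv, hy⟩
            rw [hsplit, List.mem_append] at this
            rcases this with h | h
            · exact Or.inl h
            · right; right; right
              rw [hdsup]; exact List.mem_cons_of_mem _ h

end WalkAux

section Codes
variable {V : Type} [Fintype V] [DecidableEq V] (G : SimpleGraph V) {q : ℕ} (g : V → Fin q)

/-- Codes: labelled walks of length `m` starting at `u`, where each vertex carries a
non-ground-state spin. -/
noncomputable def codes : ℕ → V → Finset (List (V × Fin q))
  | 0, u => (Finset.univ.erase (g u)).image fun s => [(u, s)]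
  | (m+1), u => ((G.neighborFinset u) ×ˢ (Finset.univ.erase (g u))).biUnion
      fun p => (codes m p.1).image fun l => (u, p.2) :: l

lemma codes_card {Δ : ℕ} (hdeg : ∀ v : V, G.degree v ≤ Δ) (m : ℕ) (u : V) :
    (codes G g m u).card ≤ (q-1) * ((q-1) * Δ)^m := by
  induction m generalizing u with
  | zero =>
    rw [codes]
    calc ((Finset.univ.erase (g u)).image fun s => [(u, s)]).card
        ≤ (Finset.univ.erase (g u)).card := Finset.card_image_le
      _ = q - 1 := by rw [Finset.card_erase_of_mem (Finset.mem_univ _)]; simp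
      _ ≤ (q-1) * ((q-1)*Δ)^0 := by simp
  | succ m ih =>
    rw [codes]
    calc (((G.neighborFinset u) ×ˢ (Finset.univ.erase (g u))).biUnion
            fun p => (codes G g m p.1).image fun l => (u, p.2) :: l).card
        ≤ ∑ p ∈ (G.neighborFinset u) ×ˢ (Finset.univ.erase (g u)),
            ((codes G g m p.1).image fun l => (u, p.2) :: l).card :=
          Finset.card_biUnion_le
      _ ≤ ∑ p ∈ (G.neighborFinset u) ×ˢ (Finset.univ.erase (g u)),
            (q-1) * ((q-1) * Δ)^m := by
          refine Finset.sum_le_sum fun p _ => ?_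
          exact le_trans Finset.card_image_le (ih p.1)
      _ = ((G.neighborFinset u).card * (Finset.univ.erase (g u)).card) *
            ((q-1) * ((q-1) * Δ)^m) := by
          rw [Finset.sum_const, Finset.card_product, smul_eq_mul]
      _ ≤ (Δ * (q-1)) * ((q-1) * ((q-1) * Δ)^m) := by
          apply Nat.mul_le_mul_right
          apply Nat.mul_le_mul
          · rw [SimpleGraph.card_neighborFinset_eq_degree]; exact hdeg u
          · rw [Finset.card_erase_of_mem (Finset.mem_univ _)]; simp
      _ = (q-1) * ((q-1) * Δ)^(m+1) := by ring

lemma mem_codes {f : V → Fin q} : ∀ {a b : V} (p : G.Walk a b),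
    (∀ x ∈ p.support, f x ≠ g x) →
    (p.support.map fun v => (v, f v)) ∈ codes G g p.length a := by
  intro a b p
  induction p with
  | nil =>
    intro h
    rw [SimpleGraph.Walk.length_nil, codes]
    exact Finset.mem_image.2 ⟨f _, Finset.mem_erase.2 ⟨h _ (by simp), Finset.mem_univ _⟩, by simp⟩
  | @cons a c b h p ih =>
    intro hs
    rw [SimpleGraph.Walk.support_cons, SimpleGraph.Walk.length_cons, codes]
    simp only [List.map_cons]
    refine Finset.mem_biUnion.2 ⟨(c, f a), ?_, ?_⟩
    · exact Finset.mem_product.2 ⟨(SimpleGraph.mem_neighborFinset _ _ _).2 h,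
        Finset.mem_erase.2 ⟨hs a (by simp), Finset.mem_univ _⟩⟩
    · exact Finset.mem_image.2 ⟨_, ih (fun x hx => hs x (by simp [hx])), rfl⟩

lemma lookup_map_self (f : V → Fin q) : ∀ (l : List V) (v : V),
    (l.map fun x => (x, f x)).lookup v = if v ∈ l then some (f v) else none := by
  intro l
  induction l with
  | nil => intro v; simp [List.lookup]
  | cons a l ih =>
    intro v
    simp only [List.map_cons, List.lookup, List.mem_cons]
    rcases eq_or_ne v a with rfl | hva
    · simp [List.lookup_cons]
    · have hb : (v == a) = false := beq_eq_false_iff_ne.mpr hva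
      simp [hb, ih v, hva]

end Codes

lemma polymer_eq_of_spin {V : Type} {G : SimpleGraph V} {q : ℕ} {g : V → Fin q}
    {γ₁ γ₂ : Polymer G q g} (h : γ₁.spin = γ₂.spin) : γ₁ = γ₂ := by
  have hv : γ₁.verts = γ₂.verts := by
    ext v
    constructor
    · intro hv
      by_contra h2
      exact γ₁.spin_ne v hv (by rw [h]; exact γ₂.spin_ground v h2)
    · intro hv
      by_contra h2
      exact γ₂.spin_ne v hv (by rw [← h]; exact γ₁.spin_ground v h2)
  cases γ₁; cases γ₂
  simp only at hv h
  subst hv; subst h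
  rfl

/-- the polymer sampling condition with constant
`τ ≥ 5 + 3 log((q-1)Δ)` implies the Kotecký–Preiss condition
`∑_{γ' ≁ γ} e^{|γ'|} w_{γ'} ≤ |γ|`. -/
theorem stmt_3 {V : Type} [Fintype V] [DecidableEq V] (G : SimpleGraph V) (q Δ : ℕ)
    (hq : 2 ≤ q) (hΔ : 3 ≤ Δ) (hdeg : ∀ v : V, G.degree v ≤ Δ)
    (g : V → Fin q) (C : Finset (Polymer G q g)) (w : Polymer G q g → ℝ)
    (hw : ∀ γ ∈ C, 0 ≤ w γ) (τ : ℝ)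
    (hτ : 5 + 3 * Real.log (((q : ℝ) - 1) * Δ) ≤ τ)
    (hsamp : ∀ γ ∈ C, w γ ≤ Real.exp (-τ * γ.size)) :
    ∀ γ ∈ C, ∑ γ' ∈ C.filter (fun γ' => γ'.Incompat γ),
        Real.exp (γ'.size) * w γ' ≤ (γ.size : ℝ) := by
  intro γ hγ
  set R : ℕ := (q-1) * Δ with hR
  set NN : Finset V := γ.verts.biUnion (fun u => insert u (G.neighborFinset u)) with hNN
  have hNNcard : NN.card ≤ γ.size * (Δ + 1) := by
    calc NN.card ≤ ∑ u ∈ γ.verts, (insert u (G.neighborFinset u)).card :=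
          Finset.card_biUnion_le
      _ ≤ ∑ u ∈ γ.verts, (Δ + 1) := by
          refine Finset.sum_le_sum fun u _ => ?_
          calc (insert u (G.neighborFinset u)).card ≤ (G.neighborFinset u).card + 1 :=
                Finset.card_insert_le _ _
            _ ≤ Δ + 1 := by
                rw [SimpleGraph.card_neighborFinset_eq_degree]
                exact Nat.add_le_add_right (hdeg u) 1
      _ = γ.size * (Δ + 1) := by rw [Finset.sum_const, smul_eq_mul]; rfl
  set F := C.filter (fun γ' => γ'.Incompat γ) with hF
  set dec : List (V × Fin q) → V → Fin q := fun c v => ((c.lookup v).getD (g v)) with hdec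
  -- counting polymers of size k+1 incompatible with γ
  have hcount : ∀ k : ℕ, (F.filter (fun γ' => γ'.size = k + 1)).card ≤ γ.size * R^(3*(k+1)) := by
    intro k
    set T : Finset (List (V × Fin q)) := NN.biUnion (fun u => codes G g (2*k) u) with hT
    have hinto : ∀ γ' ∈ F.filter (fun γ' => γ'.size = k+1), ∃ c ∈ T, dec c = γ'.spin := by
      intro γ' hγ'
      rw [Finset.mem_filter] at hγ'
      obtain ⟨hγ'F, hsize⟩ := hγ'
      rw [hF, Finset.mem_filter] at hγ'F
      obtain ⟨-, a, ha, b, hb, hab⟩ := hγ'F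
      have haNN : a ∈ NN := by
        rw [hNN]
        refine Finset.mem_biUnion.2 ⟨b, hb, ?_⟩
        rcases hab with rfl | h
        · exact Finset.mem_insert_self _ _
        · exact Finset.mem_insert_of_mem ((SimpleGraph.mem_neighborFinset _ _ _).2 h.symm)
      obtain ⟨p, hplen, hpsup⟩ :=
        cover_walk (G := G) γ'.verts.card γ'.verts rfl γ'.connected a ha
      have hmem := mem_codes G g (f := γ'.spin) p
        (fun x hx => γ'.spin_ne x (by rw [← List.mem_toFinset, hpsup] at hx; exact hx))
      have hlen2 : p.length = 2*k := by
        rw [hplen]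
        have : γ'.verts.card = k + 1 := hsize
        omega
      rw [hlen2] at hmem
      refine ⟨_, Finset.mem_biUnion.2 ⟨a, haNN, hmem⟩, ?_⟩
      funext v
      simp only [hdec]
      rw [lookup_map_self]
      by_cases hv : v ∈ p.support
      · simp [hv]
      · have hvv : v ∉ γ'.verts := by rw [← hpsup]; simpa using hv
        simp [hv, γ'.spin_ground v hvv]
    have hinj : (F.filter (fun γ' => γ'.size = k+1)).card ≤ T.card := by
      apply Finset.card_le_card_of_injOn
        (f := fun γ' => if h : ∃ c ∈ T, dec c = γ'.spin then h.choose else [])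
      · intro γ' hγ'
        have hex := hinto γ' hγ'
        beta_reduce
        rw [dif_pos hex]
        exact hex.choose_spec.1
      · intro x hx y hy hxy
        simp only [Finset.mem_coe] at hx hy
        have hex : ∃ c ∈ T, dec c = x.spin := hinto x hx
        have hey : ∃ c ∈ T, dec c = y.spin := hinto y hy
        simp only [dif_pos hex, dif_pos hey] at hxy
        have h1 := hex.choose_spec.2
        have h2 := hey.choose_spec.2
        exact polymer_eq_of_spin (by rw [← h1, ← h2, hxy])
    have hTcard : T.card ≤ γ.size * (Δ+1) * ((q-1) * R^(2*k)) := by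
      calc T.card ≤ ∑ u ∈ NN, (codes G g (2*k) u).card := Finset.card_biUnion_le
        _ ≤ ∑ u ∈ NN, (q-1) * R^(2*k) := Finset.sum_le_sum fun u _ => codes_card G g hdeg _ u
        _ = NN.card * ((q-1) * R^(2*k)) := by rw [Finset.sum_const, smul_eq_mul]
        _ ≤ γ.size * (Δ+1) * ((q-1) * R^(2*k)) := Nat.mul_le_mul_right _ hNNcard
    have harith : γ.size * (Δ+1) * ((q-1) * R^(2*k)) ≤ γ.size * R^(3*(k+1)) := by
      have hq1 : 1 ≤ q - 1 := by omega
      have hR3 : 3 ≤ R := by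
        calc 3 = 1 * 3 := by ring
          _ ≤ (q-1) * Δ := Nat.mul_le_mul hq1 hΔ
      have key : (Δ+1) * (q-1) ≤ R^3 := by
        have h1 : Δ + 1 ≤ Δ^3 := by
          have h9 : 3*3*Δ ≤ Δ*Δ*Δ := Nat.mul_le_mul (Nat.mul_le_mul hΔ hΔ) le_rfl
          have hc : Δ^3 = Δ*Δ*Δ := by ring
          omega
        have h2 : q - 1 ≤ (q-1)^3 := Nat.le_self_pow (by norm_num) _
        calc (Δ+1) * (q-1) ≤ Δ^3 * (q-1)^3 := Nat.mul_le_mul h1 h2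
          _ = R^3 := by rw [hR]; ring
      calc γ.size * (Δ+1) * ((q-1) * R^(2*k))
          = γ.size * ((Δ+1) * (q-1) * R^(2*k)) := by ring
        _ ≤ γ.size * (R^3 * R^(2*k)) := by
            apply Nat.mul_le_mul_left
            exact Nat.mul_le_mul_right _ key
        _ = γ.size * R^(2*k+3) := by rw [← pow_add, Nat.add_comm]
        _ ≤ γ.size * R^(3*(k+1)) := by
            apply Nat.mul_le_mul_left
            exact Nat.pow_le_pow_right (by omega) (by omega)
    omega
  -- real analysis part
  have hRr : ((R : ℕ) : ℝ) = ((q : ℝ) - 1) * Δ := by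
    rw [hR]; push_cast [Nat.cast_sub (by omega : 1 ≤ q)]; ring
  set L : ℝ := Real.log (((q : ℝ) - 1) * Δ) with hL
  have hRpos : (1:ℝ) ≤ ((q : ℝ) - 1) * Δ := by
    have h1 : (1:ℝ) ≤ (q:ℝ) - 1 := by
      have : (2:ℝ) ≤ (q:ℝ) := by exact_mod_cast hq
      linarith
    have h2 : (1:ℝ) ≤ (Δ:ℝ) := by
      have : (3:ℝ) ≤ (Δ:ℝ) := by exact_mod_cast hΔ
      linarith
    nlinarith
  have hLnn : 0 ≤ L := Real.log_nonneg hRpos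
  set r : ℝ := Real.exp (-4) with hr
  have hrpos : 0 < r := Real.exp_pos _
  have hrhalf : r ≤ 1/2 := by
    rw [hr, Real.exp_neg]
    have h2 : (2:ℝ) ≤ Real.exp 4 := by
      have := Real.add_one_le_exp (4:ℝ)
      linarith
    rw [inv_le_comm₀ (by linarith) (by norm_num)]
    linarith [h2]
  -- key per-size bound
  have hkey : ∀ m : ℕ, ((R:ℕ):ℝ)^(3*m) * Real.exp ((1-τ) * m) ≤ r^m := by
    intro m
    have hRexp : ((R:ℕ):ℝ)^(3*m) = Real.exp ((3*m) * L) := by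
      rw [hRr, ← Real.exp_log (by linarith : (0:ℝ) < ((q : ℝ) - 1) * Δ), ← hL,
        ← Real.exp_nat_mul]
      norm_num
    rw [hRexp, ← Real.exp_add, hr, ← Real.exp_nat_mul]
    apply Real.exp_le_exp.2
    have hm : (0:ℝ) ≤ (m:ℝ) := Nat.cast_nonneg m
    have hfac : 3 * L + (1 - τ) ≤ -4 := by linarith
    nlinarith [mul_nonneg hm (by linarith : (0:ℝ) ≤ τ - 5 - 3*L)]
  -- termwise bound then fiberwise sum
  have hstep1 : ∑ γ' ∈ F, Real.exp (γ'.size) * w γ' ≤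
      ∑ γ' ∈ F, Real.exp ((1-τ) * γ'.size) := by
    refine Finset.sum_le_sum fun γ' hγ' => ?_
    have hγ'C : γ' ∈ C := (Finset.mem_filter.1 hγ').1
    calc Real.exp (γ'.size) * w γ' ≤ Real.exp (γ'.size) * Real.exp (-τ * γ'.size) := by
          exact mul_le_mul_of_nonneg_left (hsamp γ' hγ'C) (Real.exp_nonneg _)
      _ = Real.exp ((1-τ) * γ'.size) := by rw [← Real.exp_add]; ring_nf
  set n : ℕ := Fintype.card V with hn
  have hfib : ∑ γ' ∈ F, Real.exp ((1-τ) * γ'.size) =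
      ∑ k ∈ Finset.range (n+1), ∑ γ' ∈ F.filter (fun γ' => γ'.size = k),
        Real.exp ((1-τ) * γ'.size) := by
    rw [Finset.sum_fiberwise_of_maps_to]
    intro γ' _
    rw [Finset.mem_range]
    have : γ'.verts.card ≤ n := by rw [hn, ← Finset.card_univ]; exact Finset.card_le_univ _
    exact Nat.lt_succ_of_le this
  have hinner : ∀ k, ∑ γ' ∈ F.filter (fun γ' => γ'.size = k),
      Real.exp ((1-τ) * γ'.size) =
      ((F.filter (fun γ' => γ'.size = k)).card : ℝ) * Real.exp ((1-τ) * k) := by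
    intro k
    rw [Finset.sum_congr rfl (fun γ' hγ' => by
      rw [(Finset.mem_filter.1 hγ').2]), Finset.sum_const, nsmul_eq_mul]
  have hzero : (F.filter (fun γ' => γ'.size = 0)).card = 0 := by
    rw [Finset.card_eq_zero]
    rw [Finset.filter_eq_empty_iff]
    intro γ' _
    have : 0 < γ'.verts.card := Finset.card_pos.2 γ'.nonempty
    intro h
    rw [Polymer.size] at h
    omega
  -- per-k real bound
  have hterm : ∀ j : ℕ, ((F.filter (fun γ' => γ'.size = j+1)).card : ℝ) *
      Real.exp ((1-τ) * (j+1)) ≤ (γ.size : ℝ) * r^(j+1) := by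
    intro j
    calc ((F.filter (fun γ' => γ'.size = j+1)).card : ℝ) * Real.exp ((1-τ) * (j+1))
        ≤ ((γ.size * R^(3*(j+1)) : ℕ) : ℝ) * Real.exp ((1-τ) * (j+1)) := by
          apply mul_le_mul_of_nonneg_right _ (Real.exp_nonneg _)
          exact_mod_cast hcount j
      _ = (γ.size : ℝ) * (((R:ℕ):ℝ)^(3*(j+1)) * Real.exp ((1-τ) * ((j+1:ℕ):ℝ))) := by
          push_cast; ring
      _ ≤ (γ.size : ℝ) * r^(j+1) := by
          apply mul_le_mul_of_nonneg_left _ (Nat.cast_nonneg _)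
          exact_mod_cast hkey (j+1)
  -- assemble
  calc ∑ γ' ∈ F, Real.exp (γ'.size) * w γ'
      ≤ ∑ γ' ∈ F, Real.exp ((1-τ) * γ'.size) := hstep1
    _ = ∑ k ∈ Finset.range (n+1), ((F.filter (fun γ' => γ'.size = k)).card : ℝ) *
          Real.exp ((1-τ) * k) := by
        rw [hfib]; exact Finset.sum_congr rfl fun k _ => hinner k
    _ = ∑ j ∈ Finset.range n, ((F.filter (fun γ' => γ'.size = j+1)).card : ℝ) *
          Real.exp ((1-τ) * (j+1)) := by
        rw [Finset.sum_range_succ']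
        push_cast [hzero]
        simp
    _ ≤ ∑ j ∈ Finset.range n, (γ.size : ℝ) * r^(j+1) :=
        Finset.sum_le_sum fun j _ => hterm j
    _ = (γ.size : ℝ) * (r * ∑ j ∈ Finset.range n, r^j) := by
        rw [Finset.mul_sum, Finset.mul_sum]
        exact Finset.sum_congr rfl fun j _ => by ring
    _ ≤ (γ.size : ℝ) * (r * 2) := by
        apply mul_le_mul_of_nonneg_left _ (Nat.cast_nonneg _)
        apply mul_le_mul_of_nonneg_left _ hrpos.le
        calc ∑ j ∈ Finset.range n, r^j ≤ ∑ j ∈ Finset.range n, (1/2:ℝ)^j :=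
              Finset.sum_le_sum fun j _ => pow_le_pow_left₀ hrpos.le hrhalf j
          _ ≤ 2 := sum_geometric_two_le n
    _ ≤ (γ.size : ℝ) * 1 := by
        apply mul_le_mul_of_nonneg_left _ (Nat.cast_nonneg _)
        linarith
    _ = (γ.size : ℝ) := mul_one _
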